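/- Let m₁, m₂, m₃, m₄, m₅ be nonzero real constants, let I ⊆ ℝ be an open interval, and let A, B, C, E, F : I → ℝ be differentiable with A(t) ≠ 0, B(t) ≠ 0, C(t) ≠ 0, E(t) ≠ 0, F(t) ≠ 0 for all t ∈ I. Suppose that for all t ∈ I: A(t)E(t)/(B(t)C(t)) = m₁m₄/(m₂m₃), F(t)/C(t) = m₅/m₃, A'(t)B(t) − A(t)B'(t) = 0, and A'(t)C(t) − A(t)C'(t) = 0. Then there exist nonzero constants c₁ and c₂ such that, with G := A, one has for all t ∈ I: B(t) = c₁ G(t), C(t) = (c₂ m₃/m₅) G(t), E(t) = (c₁ c₂ m₁ m₄/(m₂ m₅)) G(t), and F(t) = c₂ G(t); i.e., the equation belongs to the family u_t + G(t)u_{xxxxx} + c₁G(t)u_{xxx} + (c₂m₃/m₅)G(t) u u_{xxx} + (c₁c₂m₁m₄/(m₂m₅))G(t) u u_x + c₂G(t) u_x u_{xx} = 0. -/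

import Mathlib

/-- If the Wronskian of `A` and `B` vanishes on an open interval and `A` is nonvanishing,
then `B/A` is constant on the interval. -/
lemma ratio_const_of_wronskian (a b : ℝ) (A B : ℝ → ℝ)
    (hA : ∀ t ∈ Set.Ioo a b, DifferentiableAt ℝ A t)
    (hB : ∀ t ∈ Set.Ioo a b, DifferentiableAt ℝ B t)
    (hAne : ∀ t ∈ Set.Ioo a b, A t ≠ 0)
    (hW : ∀ t ∈ Set.Ioo a b, deriv A t * B t - A t * deriv B t = 0)
    {t₀ t : ℝ} (ht₀ : t₀ ∈ Set.Ioo a b) (ht : t ∈ Set.Ioo a b) :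
    B t * A t₀ = B t₀ * A t := by
  set g : ℝ → ℝ := fun s => B s / A s with hg
  have hgd : ∀ s ∈ Set.Ioo a b, DifferentiableAt ℝ g s := fun s hs =>
    (hB s hs).div (hA s hs) (hAne s hs)
  have hderiv : ∀ s ∈ Set.Ioo a b, deriv g s = 0 := by
    intro s hs
    have h := deriv_div (c := B) (d := A) (hB s hs) (hA s hs) (hAne s hs)
    rw [hg, show (fun s => B s / A s) = B / A from rfl, h]
    have hw := hW s hs
    have hnum : deriv B s * A s - B s * deriv A s = 0 := by nlinarith [hw]
    rw [hnum]; exact zero_div _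
  have key := (convex_Ioo a b).norm_image_sub_le_of_norm_deriv_le (C := 0) hgd
    (fun s hs => by simp [hderiv s hs]) ht₀ ht
  have hgeq : g t = g t₀ := by
    have h0 : ‖g t - g t₀‖ ≤ 0 := by simpa using key
    exact sub_eq_zero.mp (norm_le_zero_iff.mp h0)
  have h1 := hAne t ht
  have h2 := hAne t₀ ht₀
  replace hgeq : B t / A t = B t₀ / A t₀ := hgeq
  rw [div_eq_div_iff h1 h2] at hgeq
  linarith [hgeq]

/-- The most general form of equations of subclass (3) whose differential invariants
take the values of the constant-coefficient equation (17): the coefficients are all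
proportional to a single function `G = A`. -/
theorem general_form_from_invariants
    (m₁ m₂ m₃ m₄ m₅ : ℝ)
    (hm₁ : m₁ ≠ 0) (hm₂ : m₂ ≠ 0) (hm₃ : m₃ ≠ 0) (hm₄ : m₄ ≠ 0) (hm₅ : m₅ ≠ 0)
    (a b : ℝ) (I : Set ℝ) (hI : I = Set.Ioo a b)
    (A B C E F : ℝ → ℝ)
    (hA : ∀ t ∈ I, DifferentiableAt ℝ A t) (hB : ∀ t ∈ I, DifferentiableAt ℝ B t)
    (hC : ∀ t ∈ I, DifferentiableAt ℝ C t) (hE : ∀ t ∈ I, DifferentiableAt ℝ E t)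
    (hF : ∀ t ∈ I, DifferentiableAt ℝ F t)
    (hAne : ∀ t ∈ I, A t ≠ 0) (hBne : ∀ t ∈ I, B t ≠ 0) (hCne : ∀ t ∈ I, C t ≠ 0)
    (hEne : ∀ t ∈ I, E t ≠ 0) (hFne : ∀ t ∈ I, F t ≠ 0)
    (hJ1 : ∀ t ∈ I, A t * E t / (B t * C t) = m₁ * m₄ / (m₂ * m₃))
    (hJ2 : ∀ t ∈ I, F t / C t = m₅ / m₃)
    (hW1 : ∀ t ∈ I, deriv A t * B t - A t * deriv B t = 0)
    (hW2 : ∀ t ∈ I, deriv A t * C t - A t * deriv C t = 0) :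
    ∃ c₁ c₂ : ℝ, c₁ ≠ 0 ∧ c₂ ≠ 0 ∧ ∀ t ∈ I,
      B t = c₁ * A t
      ∧ C t = c₂ * m₃ / m₅ * A t
      ∧ E t = c₁ * c₂ * m₁ * m₄ / (m₂ * m₅) * A t
      ∧ F t = c₂ * A t := by
  subst hI
  rcases Set.eq_empty_or_nonempty (Set.Ioo a b) with hempty | ⟨t₀, ht₀⟩
  · exact ⟨1, 1, one_ne_zero, one_ne_zero, fun t ht => absurd ht (by rw [hempty]; simp)⟩
  have hA0 : A t₀ ≠ 0 := hAne t₀ ht₀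
  refine ⟨B t₀ / A t₀, F t₀ / A t₀, div_ne_zero (hBne t₀ ht₀) hA0,
    div_ne_zero (hFne t₀ ht₀) hA0, fun t ht => ?_⟩
  have hAt : A t ≠ 0 := hAne t ht
  have hBt := ratio_const_of_wronskian a b A B hA hB hAne hW1 ht₀ ht
  have hCt := ratio_const_of_wronskian a b A C hA hC hAne hW2 ht₀ ht
  have hBeq : B t = B t₀ / A t₀ * A t := by
    rw [div_mul_eq_mul_div, eq_div_iff hA0]; linarith [hBt]
  -- F = (m₅/m₃) C at t and t₀
  have hFt : F t * m₃ = m₅ * C t := (div_eq_div_iff (hCne t ht) hm₃).mp (hJ2 t ht)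
  have hFt₀ : F t₀ * m₃ = m₅ * C t₀ := (div_eq_div_iff (hCne t₀ ht₀) hm₃).mp (hJ2 t₀ ht₀)
  have hFA : F t * A t₀ = F t₀ * A t := by
    have h3 : F t * A t₀ * m₃ = F t₀ * A t * m₃ := by
      linear_combination A t₀ * hFt - A t * hFt₀ + m₅ * hCt
    exact mul_right_cancel₀ hm₃ h3
  have hFeq : F t = F t₀ / A t₀ * A t := by
    rw [div_mul_eq_mul_div, eq_div_iff hA0]; linarith [hFA]
  have hCeq' : C t = F t₀ / A t₀ * m₃ / m₅ * A t := by
    have : C t * (A t₀ * m₅) = F t₀ * m₃ * A t := by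
      linear_combination m₅ * hCt - A t * hFt₀
    field_simp
    linear_combination this
  refine ⟨hBeq, hCeq', ?_, hFeq⟩
  -- E from J1
  have hBt0 : B t ≠ 0 := hBne t ht
  have hCt0 : C t ≠ 0 := hCne t ht
  have hJ : A t * E t * (m₂ * m₃) = m₁ * m₄ * (B t * C t) :=
    (div_eq_div_iff (mul_ne_zero hBt0 hCt0) (mul_ne_zero hm₂ hm₃)).mp (hJ1 t ht)
  have hE' : E t = m₁ * m₄ * (B t * C t) / (A t * (m₂ * m₃)) := by
    rw [eq_div_iff (mul_ne_zero hAt (mul_ne_zero hm₂ hm₃))]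
    linear_combination hJ
  rw [hE', hBeq, hCeq']
  field_simp
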